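/- arXiv:1801.05558 — 3 statements merged into one kernel-verified Lean document; each statement's English description precedes it below -/
import Mathlib

section
/- (Proposition 1) Let A ∈ ℝ^{m×n}, x ∈ ℝ^n, and let U be a d-dimensional subspace of ℝ^m with d ≤ m. Then there exist an invertible T ∈ ℝ^{m×m}, a matrix W ∈ ℝ^{m×n} with A = T W, and a binary vector m ∈ {0,1}^m such that the set {−α T diag(m) Tᵀ G x : G ∈ ℝ^{m×n}, α ∈ ℝ} spans exactly U, provided x ≠ 0. -/
open Matrix

/-- Proposition 1: for `A ∈ ℝ^{m×n}`, nonzero `x ∈ ℝ^n` and a `d`-dimensional subspace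
`U ⊆ ℝ^m` (`d ≤ m`), there exist an invertible `T`, a matrix `W` with `A = T W`, and a
binary vector `mvec ∈ {0,1}^m` such that the set of attainable MT-net update directions
`{−α T diag(m) Tᵀ G x : G ∈ ℝ^{m×n}, α ∈ ℝ}` spans exactly `U`. -/
theorem stmt_5 {m n d : ℕ} (A : Matrix (Fin m) (Fin n) ℝ) (x : Fin n → ℝ) (hx : x ≠ 0)
    (U : Submodule ℝ (Fin m → ℝ)) (hU : Module.finrank ℝ U = d) (hd : d ≤ m) :
    ∃ (T : Matrix (Fin m) (Fin m) ℝ) (W : Matrix (Fin m) (Fin n) ℝ) (mvec : Fin m → ℝ),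
      IsUnit T.det ∧ A = T * W ∧ (∀ j, mvec j = 0 ∨ mvec j = 1) ∧
      Submodule.span ℝ
        {v : Fin m → ℝ | ∃ (G : Matrix (Fin m) (Fin n) ℝ) (α : ℝ),
          v = -α • ((T * diagonal mvec * Tᵀ * G) *ᵥ x)} = U := by
  classical
  obtain ⟨C, hC⟩ := Submodule.exists_isCompl U
  have hCr : Module.finrank ℝ C = m - d := by
    have h1 := Submodule.finrank_add_eq_of_isCompl hC
    rw [hU, Module.finrank_fintype_fun_eq_card, Fintype.card_fin] at h1
    omega
  let bU : Module.Basis (Fin d) ℝ U := Module.finBasisOfFinrankEq ℝ U hU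
  let bC : Module.Basis (Fin (m - d)) ℝ C := Module.finBasisOfFinrankEq ℝ C hCr
  let e : (Fin d ⊕ Fin (m - d)) ≃ Fin m :=
    finSumFinEquiv.trans (finCongr (by omega))
  let b : Module.Basis (Fin m) ℝ (Fin m → ℝ) :=
    ((bU.prod bC).map (Submodule.prodEquivOfIsCompl U C hC)).reindex e
  have hbl : ∀ i : Fin d, b (e (Sum.inl i)) = (bU i : Fin m → ℝ) := by
    intro i
    simp [b, Module.Basis.prod_apply, Submodule.coe_prodEquivOfIsCompl']
  have he : ∀ i : Fin d, ((e (Sum.inl i) : Fin m) : ℕ) = (i : ℕ) := by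
    intro i; simp [e]
  let T : Matrix (Fin m) (Fin m) ℝ := (Pi.basisFun ℝ (Fin m)).toMatrix b
  have hT : IsUnit T.det := by
    have := (Pi.basisFun ℝ (Fin m)).invertibleToMatrix b
    exact Matrix.isUnit_det_of_invertible T
  have hTt : IsUnit Tᵀ.det := by rwa [Matrix.det_transpose]
  let mvec : Fin m → ℝ := fun j => if (j : ℕ) < d then 1 else 0
  let D := diagonal mvec
  refine ⟨T, T⁻¹ * A, mvec, hT, ?_, fun j => by by_cases h : (j : ℕ) < d <;> simp [mvec, h], ?_⟩
  · rw [← Matrix.mul_assoc, Matrix.mul_nonsing_inv _ hT, Matrix.one_mul]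
  obtain ⟨j0, hj0⟩ : ∃ j, x j ≠ 0 := by
    by_contra h; push_neg at h; exact hx (funext h)
  -- the set of updates is the range of `(T * D).mulVecLin`
  have hS : {v : Fin m → ℝ | ∃ (G : Matrix (Fin m) (Fin n) ℝ) (α : ℝ),
      v = -α • ((T * diagonal mvec * Tᵀ * G) *ᵥ x)}
      = ↑(LinearMap.range (T * D).mulVecLin) := by
    ext v
    constructor
    · rintro ⟨G, α, rfl⟩
      refine ⟨-α • ((Tᵀ * G) *ᵥ x), ?_⟩
      simp only [Matrix.mulVecLin_apply, Matrix.mulVec_smul, ← Matrix.mulVec_mulVec,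
        Matrix.mul_assoc, D]
    · rintro ⟨w, hw⟩
      set G0 : Matrix (Fin m) (Fin n) ℝ :=
        Matrix.of fun i j => if j = j0 then w i / x j0 else 0 with hG0
      refine ⟨Tᵀ⁻¹ * G0, -1, ?_⟩
      have h1 : T * diagonal mvec * Tᵀ * (Tᵀ⁻¹ * G0) = T * diagonal mvec * G0 := by
        rw [Matrix.mul_assoc (T * diagonal mvec) Tᵀ, ← Matrix.mul_assoc Tᵀ,
          Matrix.mul_nonsing_inv _ hTt, Matrix.one_mul]
      have h2 : G0 *ᵥ x = w := by
        funext i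
        simp only [Matrix.mulVec, dotProduct, hG0, Matrix.of_apply]
        rw [Finset.sum_eq_single j0]
        · rw [if_pos rfl, div_mul_cancel₀ _ hj0]
        · intro bb _ hbb; rw [if_neg hbb, zero_mul]
        · intro h; exact absurd (Finset.mem_univ j0) h
      rw [h1, ← Matrix.mulVec_mulVec, h2]
      rw [← hw]
      simp [D]
  rw [hS, Submodule.span_eq, Matrix.range_mulVecLin]
  -- columns of T * D
  have hcol : ∀ j, (T * D)ᵀ j = mvec j • b j := by
    intro j; funext i
    simp [T, D, Matrix.mul_diagonal, Module.Basis.toMatrix_apply, mul_comm]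
  have hUspan : Submodule.span ℝ (Set.range fun i : Fin d => (bU i : Fin m → ℝ)) = U := by
    have him : (Set.range fun i : Fin d => (bU i : Fin m → ℝ)) = U.subtype '' Set.range bU := by
      rw [← Set.range_comp]; rfl
    rw [him, ← Submodule.map_span, bU.span_eq, Submodule.map_subtype_top]
  rw [← hUspan]
  apply le_antisymm
  · rw [Submodule.span_le]
    rintro _ ⟨j, rfl⟩
    rw [show (T * D).col j = (T * D)ᵀ j from rfl, hcol]
    by_cases hj : (j : ℕ) < d
    · have hmv : mvec j = 1 := if_pos hj
      have hj' : j = e (Sum.inl ⟨(j : ℕ), hj⟩) := by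
        apply Fin.ext; rw [he]
      rw [hmv, one_smul, hj', hbl]
      exact Submodule.subset_span ⟨⟨(j : ℕ), hj⟩, rfl⟩
    · have hmv : mvec j = 0 := if_neg hj
      rw [hmv, zero_smul]
      exact Submodule.zero_mem _
  · rw [Submodule.span_le]
    rintro _ ⟨i, rfl⟩
    have hmv : mvec (e (Sum.inl i)) = 1 := by
      have : ((e (Sum.inl i) : Fin m) : ℕ) < d := by rw [he]; exact i.2
      exact if_pos this
    have hbv : (bU i : Fin m → ℝ) = (T * D)ᵀ (e (Sum.inl i)) := by
      rw [hcol, hmv, one_smul, hbl]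
    show (bU i : Fin m → ℝ) ∈ _
    rw [hbv]
    exact Submodule.subset_span ⟨_, rfl⟩
end

section
/- (Proposition 2, core linear algebra) Let U be a d-dimensional subspace of ℝ^m and g a positive definite symmetric bilinear form (metric) on U. Then there exists an invertible T ∈ ℝ^{m×m} and a binary vector m with d ones such that for every v ∈ ℝ^m, the vector −T diag(m) Tᵀ v lies in U and is the direction of steepest descent of the linear functional w ↦ ⟨v, w⟩ restricted to U with respect to g; equivalently, T diag(m) Tᵀ restricted to U acts as the inverse of the Gram matrix of g in a suitable basis. -/
open Matrix

/-- Proposition 2 (core linear algebra): let `U ⊆ ℝ^m` be a `d`-dimensional subspace and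
`g` a metric on `U` (a bilinear form, symmetric and positive definite on `U`). Then there
exist an invertible `T` and a binary vector `mvec` with exactly `d` ones such that for
every `v ∈ ℝ^m`, the vector `u = −T diag(m) Tᵀ v` lies in `U` and is the steepest descent
direction of `w ↦ ⟨v, w⟩` on `U` with respect to `g`, characterized by the Riesz-type
identity `g(u, w) = −⟨v, w⟩` for all `w ∈ U` (i.e. `T diag(m) Tᵀ` acts on `U` as the
inverse of the Gram matrix of `g`). -/
theorem stmt_7 {m d : ℕ} (U : Submodule ℝ (Fin m → ℝ)) (hU : Module.finrank ℝ U = d)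
    (g : (Fin m → ℝ) →ₗ[ℝ] (Fin m → ℝ) →ₗ[ℝ] ℝ)
    (hsymm : ∀ u ∈ U, ∀ w ∈ U, g u w = g w u)
    (hpos : ∀ u ∈ U, u ≠ 0 → 0 < g u u) :
    ∃ (T : Matrix (Fin m) (Fin m) ℝ) (mvec : Fin m → ℝ),
      IsUnit T.det ∧ (∀ j, mvec j = 0 ∨ mvec j = 1) ∧ Set.ncard {j | mvec j = 1} = d ∧
      ∀ v : Fin m → ℝ,
        (-((T * diagonal mvec * Tᵀ) *ᵥ v)) ∈ U ∧
        ∀ w ∈ U, g (-((T * diagonal mvec * Tᵀ) *ᵥ v)) w = -(v ⬝ᵥ w) := by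
  classical
  have hdm : d ≤ m := by
    have h1 := Submodule.finrank_le U
    rw [hU, Module.finrank_pi, Fintype.card_fin] at h1
    exact h1
  set r := m - d with hr
  have hdr : d + r = m := Nat.add_sub_cancel' hdm
  haveI : FiniteDimensional ℝ U := inferInstance
  -- the bilinear form restricted to U
  let G : LinearMap.BilinForm ℝ U := g.domRestrict₁₂ U U
  have hG : ∀ x y : U, G x y = g (x : Fin m → ℝ) (y : Fin m → ℝ) := fun x y => rfl
  have hGsymm : G.IsSymm := by
    refine ⟨fun x y => ?_⟩
    simpa [hG] using hsymm (x : Fin m → ℝ) x.2 (y : Fin m → ℝ) y.2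
  have hGpos : ∀ x : U, x ≠ 0 → 0 < G x x := by
    intro x hx
    have hne : ((x : Fin m → ℝ)) ≠ 0 := by
      simpa [Submodule.coe_eq_zero] using hx
    simpa [hG] using hpos (x : Fin m → ℝ) x.2 hne
  -- orthogonal basis for G, then normalize
  obtain ⟨w0, hw0⟩ := LinearMap.BilinForm.exists_orthogonal_basis (LinearMap.BilinForm.isSymm_iff.mp hGsymm)
  let w : Module.Basis (Fin d) ℝ U := w0.reindex (finCongr hU)
  have hwortho : ∀ i j : Fin d, i ≠ j → G (w i) (w j) = 0 := by
    intro i j hij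
    simp only [w, Module.Basis.reindex_apply]
    exact hw0 (fun h => hij (by simpa using congrArg (finCongr hU) h))
  have hwpos : ∀ i, 0 < G (w i) (w i) := fun i =>
    hGpos (w i) (Module.Basis.ne_zero w i)
  let s : Fin d → ℝ := fun i => Real.sqrt (G (w i) (w i))
  have hs : ∀ i, 0 < s i := fun i => Real.sqrt_pos.mpr (hwpos i)
  let su : Fin d → ℝˣ := fun i => Units.mk0 ((s i)⁻¹) (inv_ne_zero (hs i).ne')
  let b : Module.Basis (Fin d) ℝ U := w.unitsSMul su
  have hb : ∀ i, b i = (s i)⁻¹ • w i := fun i => by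
    simp [b, Module.Basis.unitsSMul_apply, su, Units.smul_def]
  have h_on : ∀ i j, G (b i) (b j) = if i = j then 1 else 0 := by
    intro i j
    rcases eq_or_ne i j with rfl | hij
    · rw [hb, if_pos rfl]
      simp only [_root_.map_smul, LinearMap.smul_apply, smul_eq_mul]
      have hsq : s i * s i = G (w i) (w i) := Real.mul_self_sqrt (hwpos i).le
      field_simp [(hs i).ne']
      linarith [hsq]
    · rw [hb, hb, if_neg hij]
      simp only [_root_.map_smul, LinearMap.smul_apply, smul_eq_mul]
      rw [hwortho i j hij]
      ring
  -- expansion of any element of U in basis b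
  have hexp : ∀ (W : U) (i : Fin d), b.repr W i = G (b i) W := by
    intro W i
    conv_rhs => rw [← b.sum_repr W]
    rw [map_sum]
    simp only [_root_.map_smul, smul_eq_mul]
    rw [Finset.sum_eq_single i
      (fun j _ hj => by rw [h_on i j, if_neg (Ne.symm hj)]; ring)
      (by simp)]
    rw [h_on i i, if_pos rfl]
    ring
  -- complement of U and a basis of it
  obtain ⟨V, hV⟩ := Submodule.exists_isCompl U
  have hVrank : Module.finrank ℝ V = r := by
    have h1 := Submodule.finrank_add_eq_of_isCompl hV
    rw [hU, Module.finrank_pi, Fintype.card_fin] at h1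
    omega
  let c : Module.Basis (Fin r) ℝ V := Module.finBasisOfFinrankEq ℝ V hVrank
  let e : (Fin d ⊕ Fin r) ≃ Fin m := finSumFinEquiv.trans (finCongr hdr)
  let B : Module.Basis (Fin m) ℝ (Fin m → ℝ) :=
    ((b.prod c).map (Submodule.prodEquivOfIsCompl U V hV)).reindex e
  have hBl : ∀ i : Fin d, B (e (Sum.inl i)) = (b i : Fin m → ℝ) := by
    intro i
    simp only [B, Module.Basis.reindex_apply, Equiv.symm_apply_apply, Module.Basis.map_apply,
      Module.Basis.prod_apply, Sum.elim_inl, Function.comp_apply, LinearMap.inl_apply]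
    rw [show ((Submodule.prodEquivOfIsCompl U V hV) (b i, 0) : Fin m → ℝ)
        = (U.subtype.coprod V.subtype) (b i, 0) from rfl]
    simp
  have heval : ∀ i : Fin d, ((e (Sum.inl i)) : ℕ) = (i : ℕ) := by
    intro i; simp [e]
  have hevar : ∀ k : Fin r, ((e (Sum.inr k)) : ℕ) = d + (k : ℕ) := by
    intro k; simp [e]
  let mvec : Fin m → ℝ := fun j => if (j : ℕ) < d then 1 else 0
  let T : Matrix (Fin m) (Fin m) ℝ := (Pi.basisFun ℝ (Fin m)).toMatrix ⇑B
  have hT : ∀ i j, T i j = B j i := by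
    intro i j; simp [T, Module.Basis.toMatrix_apply]
  haveI : Invertible T := (Pi.basisFun ℝ (Fin m)).invertibleToMatrix B
  refine ⟨T, mvec, ?_, ?_, ?_, ?_⟩
  · exact (Matrix.isUnit_iff_isUnit_det T).mp (isUnit_of_invertible T)
  · intro j
    by_cases h : (j : ℕ) < d <;> simp [mvec, h]
  · have hset : {j : Fin m | mvec j = 1} = Fin.castLE hdm '' Set.univ := by
      ext j
      constructor
      · intro hj
        have hjd : (j : ℕ) < d := by
          by_contra h
          simp [mvec, h] at hj
        exact ⟨⟨(j : ℕ), hjd⟩, trivial, by ext; simp⟩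
      · rintro ⟨i, -, rfl⟩
        simp [mvec, i.2]
    rw [hset, Set.ncard_image_of_injective _ (Fin.castLE_injective hdm)]
    simp [Set.ncard_univ]
  · intro v
    -- the key computation
    have hAv : (T * diagonal mvec * Tᵀ) *ᵥ v
        = ∑ i : Fin d, (((b i : Fin m → ℝ)) ⬝ᵥ v) • (b i : Fin m → ℝ) := by
      have h1 : (T * diagonal mvec * Tᵀ) *ᵥ v
          = ∑ j : Fin m, (mvec j * ((B j : Fin m → ℝ) ⬝ᵥ v)) • (B j : Fin m → ℝ) := by
        rw [Matrix.mul_assoc, ← Matrix.mulVec_mulVec, ← Matrix.mulVec_mulVec]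
        funext i0
        simp only [Matrix.mulVec, dotProduct, Matrix.mulVec_diagonal,
          Matrix.transpose_apply, hT, Finset.sum_apply, Pi.smul_apply, smul_eq_mul]
        refine Finset.sum_congr rfl fun j _ => ?_
        rw [Finset.sum_eq_single j
          (fun x _ hx => by rw [Matrix.diagonal_apply_ne' mvec hx]; ring) (by simp),
          Matrix.diagonal_apply_eq]
        ring
      rw [h1, ← Equiv.sum_comp e
        (fun j => (mvec j * ((B j : Fin m → ℝ) ⬝ᵥ v)) • (B j : Fin m → ℝ)),
        Fintype.sum_sum_type]
      have h2 : ∀ k : Fin r,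
          (mvec (e (Sum.inr k)) * ((B (e (Sum.inr k)) : Fin m → ℝ) ⬝ᵥ v))
            • (B (e (Sum.inr k)) : Fin m → ℝ) = 0 := by
        intro k
        have : ¬ ((e (Sum.inr k) : ℕ) < d) := by rw [hevar k]; omega
        simp [mvec, this]
      rw [Finset.sum_congr rfl (fun k _ => h2 k), Finset.sum_const_zero, add_zero]
      refine Finset.sum_congr rfl (fun i _ => ?_)
      have : ((e (Sum.inl i) : ℕ) < d) := by rw [heval i]; exact i.2
      simp [mvec, this, hBl i]
    constructor
    · rw [hAv]
      exact neg_mem (Submodule.sum_mem U (fun i _ =>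
        Submodule.smul_mem U _ (b i).2))
    · intro w' hw'
      rw [map_neg, LinearMap.neg_apply, neg_inj, hAv]
      set W : U := ⟨w', hw'⟩ with hW
      have hwsum : w' = ∑ i : Fin d, (g (b i : Fin m → ℝ) w') • (b i : Fin m → ℝ) := by
        have h3 := b.sum_repr W
        calc w' = ((∑ i : Fin d, b.repr W i • b i : U) : Fin m → ℝ) := by
              rw [h3]
        _ = ∑ i : Fin d, b.repr W i • (b i : Fin m → ℝ) := by
              simp only [Submodule.coe_sum, Submodule.coe_smul]
        _ = ∑ i : Fin d, (g (b i : Fin m → ℝ) w') • (b i : Fin m → ℝ) := by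
              refine Finset.sum_congr rfl fun i _ => ?_
              rw [hexp W i, hG]
      rw [map_sum]
      simp only [_root_.map_smul, LinearMap.sum_apply, LinearMap.smul_apply, smul_eq_mul]
      conv_rhs => rw [hwsum]
      simp only [dotProduct, Finset.sum_apply, Pi.smul_apply, smul_eq_mul,
        Finset.mul_sum]
      rw [Finset.sum_comm]
      refine Finset.sum_congr rfl (fun i _ => ?_)
      rw [Finset.sum_mul]
      refine Finset.sum_congr rfl (fun k _ => ?_)
      ring
end

section
/- The Gumbel-Softmax limit: for fixed logit ζ ∈ ℝ and independent standard Gumbel variables g₁, g₂, the random variable σ_c = exp((ζ+g₁)/c) / (exp((ζ+g₁)/c) + exp(g₂/c)) converges in distribution as c → 0⁺ to a Bernoulli random variable with success probability e^ζ/(e^ζ+1). -/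
open MeasureTheory ProbabilityTheory Real Filter Topology
open scoped Set
section Aux
open Set

private lemma sigma_eq (a b c : ℝ) :
    exp (a / c) / (exp (a / c) + exp (b / c)) = 1 / (1 + exp ((b - a) / c)) := by
  have h : exp ((b - a) / c) = exp (b / c) / exp (a / c) := by
    rw [← Real.exp_sub, ← sub_div]
  rw [h]
  field_simp

private lemma sigma_tendsto_one {d : ℝ} (hd : d < 0) :
    Tendsto (fun c : ℝ => 1 / (1 + exp (d / c))) (𝓝[>] 0) (𝓝 1) := by
  have h1 : Tendsto (fun c : ℝ => d / c) (𝓝[>] (0:ℝ)) atBot := by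
    simpa [div_eq_mul_inv] using tendsto_inv_nhdsGT_zero.const_mul_atTop_of_neg hd
  have h2 : Tendsto (fun c : ℝ => exp (d / c)) (𝓝[>] (0:ℝ)) (𝓝 0) :=
    Real.tendsto_exp_atBot.comp h1
  have h3 : Tendsto (fun c : ℝ => 1 + exp (d / c)) (𝓝[>] (0:ℝ)) (𝓝 1) := by
    simpa using tendsto_const_nhds.add h2
  simpa [one_div] using h3.inv₀ one_ne_zero

private lemma sigma_tendsto_zero {d : ℝ} (hd : 0 < d) :
    Tendsto (fun c : ℝ => 1 / (1 + exp (d / c))) (𝓝[>] 0) (𝓝 0) := by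
  have h1 : Tendsto (fun c : ℝ => d / c) (𝓝[>] (0:ℝ)) atTop := by
    simpa [div_eq_mul_inv] using tendsto_inv_nhdsGT_zero.const_mul_atTop hd
  have h2 : Tendsto (fun c : ℝ => 1 + exp (d / c)) (𝓝[>] (0:ℝ)) atTop :=
    tendsto_atTop_add_const_left _ 1 (Real.tendsto_exp_atTop.comp h1)
  simpa [one_div, Pi.inv_def] using h2.inv_tendsto_atTop

private lemma gumbel_no_atom {Ω : Type*} [MeasureSpace Ω] [IsProbabilityMeasure (ℙ : Measure Ω)]
    (g : Ω → ℝ) (hg : Measurable g)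
    (hcdf : ∀ x : ℝ, ℙ {ω | g ω ≤ x} = ENNReal.ofReal (exp (-exp (-x)))) (t : ℝ) :
    ℙ {ω | g ω = t} = 0 := by
  set F : ℝ → ℝ := fun x => exp (-exp (-x)) with hF
  have hFc : Continuous F := by fun_prop
  have key : ∀ δ : ℝ, 0 < δ → ℙ {ω | g ω = t} ≤ ENNReal.ofReal δ := by
    intro δ hδ
    have htend : Tendsto (fun ε : ℝ => F t - F (t - ε)) (𝓝[>] 0) (𝓝 0) := by
      have h0 : Tendsto (fun ε : ℝ => t - ε) (𝓝[>] (0:ℝ)) (𝓝 t) := by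
        have h00 : Tendsto (fun ε : ℝ => t - ε) (𝓝 (0:ℝ)) (𝓝 t) := by
          have : Continuous (fun ε : ℝ => t - ε) := by fun_prop
          simpa using this.tendsto 0
        exact h00.mono_left nhdsWithin_le_nhds
      have h2 := (hFc.tendsto t).comp h0
      have h3 := (tendsto_const_nhds : Tendsto (fun _ : ℝ => F t) (𝓝[>] (0:ℝ)) (𝓝 (F t))).sub h2
      simpa using h3
    have hev : ∀ᶠ ε in 𝓝[>] (0:ℝ), F t - F (t - ε) < δ :=
      htend.eventually_lt_const hδ
    obtain ⟨ε, hlt, hε⟩ := (hev.and self_mem_nhdsWithin).exists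
    have hεpos : (0:ℝ) < ε := hε
    have hsub : {ω | g ω = t} ⊆ {ω | g ω ≤ t} \ {ω | g ω ≤ t - ε} := by
      intro ω hω
      simp only [Set.mem_setOf_eq, Set.mem_diff] at hω ⊢
      constructor
      · exact le_of_eq hω
      · intro h; rw [hω] at h; linarith
    calc ℙ {ω | g ω = t} ≤ ℙ ({ω | g ω ≤ t} \ {ω | g ω ≤ t - ε}) := measure_mono hsub
      _ = ℙ {ω | g ω ≤ t} - ℙ {ω | g ω ≤ t - ε} := by
          apply measure_diff ?_ ?_ (measure_ne_top _ _)
          · intro ω hω; simp only [Set.mem_setOf_eq] at hω ⊢; linarith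
          · exact (hg measurableSet_Iic).nullMeasurableSet
      _ = ENNReal.ofReal (F t) - ENNReal.ofReal (F (t - ε)) := by rw [hcdf, hcdf]
      _ = ENNReal.ofReal (F t - F (t - ε)) := (ENNReal.ofReal_sub _ (by positivity)).symm
      _ ≤ ENNReal.ofReal δ := ENNReal.ofReal_le_ofReal (le_of_lt hlt)
  have h0 : ℙ {ω | g ω = t} ≤ 0 := by
    apply ENNReal.le_of_forall_pos_le_add
    intro ε hε _
    have := key ε (by exact_mod_cast hε)
    simpa [ENNReal.ofReal_coe_nnreal] using this
  exact le_antisymm h0 zero_le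

private lemma gumbel_Iio {Ω : Type*} [MeasureSpace Ω] [IsProbabilityMeasure (ℙ : Measure Ω)]
    (g : Ω → ℝ) (hg : Measurable g)
    (hcdf : ∀ x : ℝ, ℙ {ω | g ω ≤ x} = ENNReal.ofReal (exp (-exp (-x)))) (t : ℝ) :
    ℙ {ω | g ω < t} = ENNReal.ofReal (exp (-exp (-t))) := by
  apply le_antisymm
  · rw [← hcdf t]
    exact measure_mono fun ω hω => le_of_lt (show g ω < t from hω)
  · rw [← hcdf t]
    calc ℙ {ω | g ω ≤ t} ≤ ℙ ({ω | g ω < t} ∪ {ω | g ω = t}) :=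
          measure_mono fun ω hω => by
            rcases lt_or_eq_of_le (show g ω ≤ t from hω) with h | h
            exacts [Or.inl h, Or.inr h]
      _ ≤ ℙ {ω | g ω < t} + ℙ {ω | g ω = t} := measure_union_le _ _
      _ = ℙ {ω | g ω < t} := by rw [gumbel_no_atom g hg hcdf t, add_zero]

private lemma gumbel_tie {Ω : Type*} [MeasureSpace Ω] [IsProbabilityMeasure (ℙ : Measure Ω)]
    (g₁ g₂ : Ω → ℝ) (hg₁ : Measurable g₁) (hg₂ : Measurable g₂)
    (hindep : IndepFun g₁ g₂ ℙ)
    (hcdf₂ : ∀ x : ℝ, ℙ {ω | g₂ ω ≤ x} = ENNReal.ofReal (exp (-exp (-x))))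
    (ζ : ℝ) : ℙ {ω | g₂ ω = ζ + g₁ ω} = 0 := by
  haveI : IsProbabilityMeasure (Measure.map g₁ ℙ) := Measure.isProbabilityMeasure_map hg₁.aemeasurable
  haveI : IsProbabilityMeasure (Measure.map g₂ ℙ) := Measure.isProbabilityMeasure_map hg₂.aemeasurable
  have hpair : Measurable fun ω => (g₁ ω, g₂ ω) := hg₁.prodMk hg₂
  have hprod : Measure.map (fun ω => (g₁ ω, g₂ ω)) ℙ = (Measure.map g₁ ℙ).prod (Measure.map g₂ ℙ) :=
    (indepFun_iff_map_prod_eq_prod_map_map hg₁.aemeasurable hg₂.aemeasurable).mp hindep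
  have hS : MeasurableSet {p : ℝ × ℝ | p.2 = ζ + p.1} :=
    measurableSet_eq_fun measurable_snd (measurable_const.add measurable_fst)
  have heq : {ω | g₂ ω = ζ + g₁ ω} = (fun ω => (g₁ ω, g₂ ω)) ⁻¹' {p : ℝ × ℝ | p.2 = ζ + p.1} :=
    rfl
  rw [heq, ← Measure.map_apply hpair hS, hprod, Measure.prod_apply hS]
  have hz : ∀ x : ℝ, (Measure.map g₂ ℙ) (Prod.mk x ⁻¹' {p : ℝ × ℝ | p.2 = ζ + p.1}) = 0 := by
    intro x
    have h1 : Prod.mk x ⁻¹' {p : ℝ × ℝ | p.2 = ζ + p.1} = {y : ℝ | y = ζ + x} := rfl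
    rw [h1, Measure.map_apply hg₂ (by exact measurableSet_eq_fun measurable_id measurable_const)]
    exact gumbel_no_atom g₂ hg₂ hcdf₂ (ζ + x)
  simp only [hz, lintegral_zero]

private lemma gumbel_win {Ω : Type*} [MeasureSpace Ω] [IsProbabilityMeasure (ℙ : Measure Ω)]
    (g₁ g₂ : Ω → ℝ) (hg₁ : Measurable g₁) (hg₂ : Measurable g₂)
    (hindep : IndepFun g₁ g₂ ℙ)
    (hcdf₁ : ∀ x : ℝ, ℙ {ω | g₁ ω ≤ x} = ENNReal.ofReal (exp (-exp (-x))))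
    (hcdf₂ : ∀ x : ℝ, ℙ {ω | g₂ ω ≤ x} = ENNReal.ofReal (exp (-exp (-x))))
    (ζ : ℝ) : ℙ {ω | g₂ ω < ζ + g₁ ω} = ENNReal.ofReal (exp ζ / (exp ζ + 1)) := by
  haveI : IsProbabilityMeasure (Measure.map g₁ ℙ) := Measure.isProbabilityMeasure_map hg₁.aemeasurable
  haveI : IsProbabilityMeasure (Measure.map g₂ ℙ) := Measure.isProbabilityMeasure_map hg₂.aemeasurable
  have hpair : Measurable fun ω => (g₁ ω, g₂ ω) := hg₁.prodMk hg₂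
  have hprod : Measure.map (fun ω => (g₁ ω, g₂ ω)) ℙ = (Measure.map g₁ ℙ).prod (Measure.map g₂ ℙ) :=
    (indepFun_iff_map_prod_eq_prod_map_map hg₁.aemeasurable hg₂.aemeasurable).mp hindep
  have hS : MeasurableSet {p : ℝ × ℝ | p.2 < ζ + p.1} :=
    measurableSet_lt measurable_snd (measurable_const.add measurable_fst)
  have heq : {ω | g₂ ω < ζ + g₁ ω} = (fun ω => (g₁ ω, g₂ ω)) ⁻¹' {p : ℝ × ℝ | p.2 < ζ + p.1} :=
    rfl
  rw [heq, ← Measure.map_apply hpair hS, hprod, Measure.prod_apply hS]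
  set F : ℝ → ℝ := fun x => exp (-exp (-x)) with hF
  have hsec : ∀ x : ℝ, (Measure.map g₂ ℙ) (Prod.mk x ⁻¹' {p : ℝ × ℝ | p.2 < ζ + p.1})
      = ENNReal.ofReal (F (ζ + x)) := by
    intro x
    have h1 : Prod.mk x ⁻¹' {p : ℝ × ℝ | p.2 < ζ + p.1} = Iio (ζ + x) := rfl
    rw [h1, Measure.map_apply hg₂ measurableSet_Iio]
    exact gumbel_Iio g₂ hg₂ hcdf₂ (ζ + x)
  simp only [hsec]
  -- layer cake
  have hlayer : ∫⁻ x, ENNReal.ofReal (F (ζ + x)) ∂(Measure.map g₁ ℙ)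
      = ∫⁻ t in Ioi (0:ℝ), (Measure.map g₁ ℙ) {x | t < F (ζ + x)} := by
    apply lintegral_eq_lintegral_meas_lt
    · exact Filter.Eventually.of_forall fun x => by positivity
    · exact ((by fun_prop : Continuous fun x : ℝ => F (ζ + x))).aemeasurable
  rw [hlayer]
  set r : ℝ := exp ζ with hr
  have hrpos : 0 < r := exp_pos ζ
  -- split the t-integral
  have hsplit : (Ioi (0:ℝ)) = Ioo (0:ℝ) 1 ∪ Ici (1:ℝ) := (Ioo_union_Ici_eq_Ioi one_pos).symm
  rw [hsplit, lintegral_union measurableSet_Ici (by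
    intro s hs1 hs2 x hx
    exact absurd ((hs2 hx : (1:ℝ) ≤ x)) (not_le.2 (hs1 hx).2))]
  have hIci : ∫⁻ t in Ici (1:ℝ), (Measure.map g₁ ℙ) {x | t < F (ζ + x)} = 0 := by
    rw [setLIntegral_congr_fun measurableSet_Ici (g := fun _ => 0) ?_, lintegral_zero]
    intro t ht
    have : {x : ℝ | t < F (ζ + x)} = ∅ := by
      ext x
      simp only [Set.mem_setOf_eq, Set.mem_empty_iff_false, iff_false, not_lt]
      calc F (ζ + x) ≤ 1 := by
            simp only [hF]
            exact exp_le_one_iff.mpr (neg_nonpos.mpr (exp_pos _).le)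
        _ ≤ t := ht
    simp only [this, measure_empty]
  have hIoo : ∫⁻ t in Ioo (0:ℝ) 1, (Measure.map g₁ ℙ) {x | t < F (ζ + x)}
      = ENNReal.ofReal (r / (r + 1)) := by
    have hptwise : ∀ t ∈ Ioo (0:ℝ) 1,
        (Measure.map g₁ ℙ) {x | t < F (ζ + x)} = ENNReal.ofReal (1 - t ^ r) := by
      intro t ht
      obtain ⟨ht0, ht1⟩ := ht
      have hlogt : Real.log t < 0 := log_neg ht0 ht1
      have hpos : 0 < exp ζ * (-Real.log t) := by nlinarith [exp_pos ζ]
      set a : ℝ := -Real.log (exp ζ * (-Real.log t)) with ha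
      have hset : {x : ℝ | t < F (ζ + x)} = Ioi a := by
        ext x
        simp only [Set.mem_setOf_eq, Set.mem_Ioi, hF]
        rw [show t < exp (-exp (-(ζ + x))) ↔ Real.log t < -exp (-(ζ + x)) from
          (log_lt_iff_lt_exp ht0).symm]
        rw [show (-(ζ + x)) = (-ζ) + (-x) by ring, Real.exp_add]
        constructor
        · intro h
          have h2 : exp (-x) < exp ζ * (-Real.log t) := by
            have := (mul_lt_mul_iff_right₀ (exp_pos ζ)).mpr (show exp (-ζ) * exp (-x) < -Real.log t by linarith)
            rw [← mul_assoc, ← Real.exp_add] at this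
            simpa using this
          have h3 : -x < Real.log (exp ζ * (-Real.log t)) :=
            (lt_log_iff_exp_lt hpos).mpr h2
          rw [ha]; linarith
        · intro h
          have h3 : -x < Real.log (exp ζ * (-Real.log t)) := by rw [ha] at h; linarith
          have h2 : exp (-x) < exp ζ * (-Real.log t) := (lt_log_iff_exp_lt hpos).mp h3
          have h4 : exp (-ζ) * exp (-x) < exp (-ζ) * (exp ζ * (-Real.log t)) :=
            (mul_lt_mul_iff_right₀ (exp_pos _)).mpr h2
          have h5 : exp (-ζ) * (exp ζ * (-Real.log t)) = -Real.log t := by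
            rw [← mul_assoc, ← Real.exp_add]; simp
          rw [h5] at h4
          linarith
      have hmeas : (Measure.map g₁ ℙ) (Ioi a) = 1 - ENNReal.ofReal (F a) := by
        rw [Measure.map_apply hg₁ measurableSet_Ioi]
        have hcompl : g₁ ⁻¹' Ioi a = {ω | g₁ ω ≤ a}ᶜ := by
          ext ω; simp [not_le]
        have hms : MeasurableSet {ω | g₁ ω ≤ a} := hg₁ measurableSet_Iic
        rw [hcompl, measure_compl hms (measure_ne_top _ _), measure_univ, hcdf₁]
      have hFa : F a = t ^ r := by
        simp only [hF]
        rw [ha, neg_neg, Real.exp_log hpos]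
        rw [Real.rpow_def_of_pos ht0]
        congr 1
        rw [hr]; ring
      rw [hset, hmeas, hFa]
      rw [← ENNReal.ofReal_one, ← ENNReal.ofReal_sub _ (by positivity)]
    rw [setLIntegral_congr_fun measurableSet_Ioo hptwise]
    have hInt : IntegrableOn (fun t : ℝ => 1 - t ^ r) (Ioo 0 1) := by
      apply IntegrableOn.mono_set (t := Ioc (0:ℝ) 1)
      · have h1 : IntervalIntegrable (fun t : ℝ => 1 - t ^ r) volume 0 1 :=
          intervalIntegrable_const.sub (intervalIntegral.intervalIntegrable_rpow (Or.inl hrpos.le))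
        rw [intervalIntegrable_iff, uIoc_of_le zero_le_one] at h1
        exact h1
      · exact Ioo_subset_Ioc_self
    rw [← ofReal_integral_eq_lintegral_ofReal hInt ?_]
    · congr 1
      rw [← integral_Ioc_eq_integral_Ioo, ← intervalIntegral.integral_of_le zero_le_one]
      rw [intervalIntegral.integral_sub intervalIntegrable_const
        (intervalIntegral.intervalIntegrable_rpow (Or.inl hrpos.le))]
      rw [integral_rpow (Or.inl (by linarith))]
      simp only [intervalIntegral.integral_const, smul_eq_mul, mul_one, sub_zero,
        Real.one_rpow, Real.zero_rpow (by linarith : r + 1 ≠ 0)]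
      field_simp
      ring
    · have h : ∀ᵐ t ∂(volume.restrict (Ioo (0:ℝ) 1)), 0 ≤ 1 - t ^ r :=
        (ae_restrict_iff' measurableSet_Ioo).mpr (ae_of_all _ fun t ht => by
          nlinarith [Real.rpow_le_one ht.1.le ht.2.le hrpos.le])
      filter_upwards [h] with t ht using ht
  rw [hIoo, hIci, add_zero]

end Aux
open Set in
/-- Gumbel-Softmax limit: for a fixed logit `ζ` and independent standard Gumbel random
variables `g₁, g₂` (CDF `x ↦ exp(−e^{−x})`), the random variable
`σ_c = exp((ζ+g₁)/c) / (exp((ζ+g₁)/c) + exp(g₂/c))` converges in distribution as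
`c → 0⁺` to a Bernoulli random variable with success probability `e^ζ/(e^ζ+1)`:
for every bounded continuous test function `f`,
`E[f(σ_c)] → p f(1) + (1−p) f(0)` with `p = e^ζ/(e^ζ+1)`. -/
theorem stmt_15 {Ω : Type*} [MeasureSpace Ω] [IsProbabilityMeasure (ℙ : Measure Ω)]
    (g₁ g₂ : Ω → ℝ) (hg₁ : Measurable g₁) (hg₂ : Measurable g₂)
    (hindep : IndepFun g₁ g₂ ℙ)
    (hcdf₁ : ∀ x : ℝ, ℙ {ω | g₁ ω ≤ x} = ENNReal.ofReal (exp (-exp (-x))))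
    (hcdf₂ : ∀ x : ℝ, ℙ {ω | g₂ ω ≤ x} = ENNReal.ofReal (exp (-exp (-x))))
    (ζ : ℝ) (σ : ℝ → Ω → ℝ)
    (hσ : ∀ c ω, σ c ω =
      exp ((ζ + g₁ ω) / c) / (exp ((ζ + g₁ ω) / c) + exp (g₂ ω / c))) :
    ∀ f : BoundedContinuousFunction ℝ ℝ,
      Tendsto (fun c => ∫ ω, f (σ c ω) ∂ℙ) (𝓝[>] (0 : ℝ))
        (𝓝 ((exp ζ / (exp ζ + 1)) * f 1 + (1 - exp ζ / (exp ζ + 1)) * f 0)) := by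
  intro f
  set p : ℝ := exp ζ / (exp ζ + 1) with hp
  have hp0 : 0 ≤ p := by positivity
  set A : Set Ω := {ω | g₂ ω < ζ + g₁ ω} with hA
  have hAm : MeasurableSet A := measurableSet_lt hg₂ (measurable_const.add hg₁)
  have hPA : ℙ A = ENNReal.ofReal p := gumbel_win g₁ g₂ hg₁ hg₂ hindep hcdf₁ hcdf₂ ζ
  have hN : ℙ {ω | g₂ ω = ζ + g₁ ω} = 0 := gumbel_tie g₁ g₂ hg₁ hg₂ hindep hcdf₂ ζ
  set φ : Ω → ℝ := fun ω => Set.indicator A (fun _ => f 1 - f 0) ω + f 0 with hφ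
  have hint : ∫ ω, φ ω ∂ℙ = p * f 1 + (1 - p) * f 0 := by
    rw [hφ]
    rw [integral_add ((integrable_indicator_iff hAm).2
      integrableOn_const) (integrable_const _)]
    rw [integral_indicator_const _ hAm, integral_const]
    simp only [measureReal_def, hPA, ENNReal.toReal_ofReal hp0, measure_univ, ENNReal.toReal_one,
      smul_eq_mul, one_smul]
    ring
  rw [show ((p * f 1 + (1 - p) * f 0) : ℝ) = ∫ ω, φ ω ∂ℙ from hint.symm]
  apply tendsto_integral_filter_of_dominated_convergence (fun _ => ‖f‖)
  · apply Filter.Eventually.of_forall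
    intro c
    have hm : Measurable (σ c) := by
      have : σ c = fun ω =>
          exp ((ζ + g₁ ω) / c) / (exp ((ζ + g₁ ω) / c) + exp (g₂ ω / c)) := funext (hσ c)
      rw [this]; fun_prop
    exact (f.continuous.measurable.comp hm).aestronglyMeasurable
  · apply Filter.Eventually.of_forall
    intro c
    exact ae_of_all _ fun ω => f.norm_coe_le_norm _
  · exact integrable_const _
  · have hNae : ∀ᵐ ω ∂ℙ, g₂ ω ≠ ζ + g₁ ω := by
      rw [ae_iff]
      simpa using hN
    filter_upwards [hNae] with ω hω
    have hrw : ∀ c, f (σ c ω) = f (1 / (1 + exp ((g₂ ω - (ζ + g₁ ω)) / c))) := by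
      intro c; rw [hσ c ω, sigma_eq]
    simp only [hrw]
    rcases lt_or_gt_of_ne hω with h | h
    · have hφω : φ ω = f 1 := by
        have hmem : ω ∈ A := h
        simp [hφ, Set.indicator_of_mem hmem]
      rw [hφω]
      exact (f.continuous.tendsto 1).comp
        (sigma_tendsto_one (by linarith : g₂ ω - (ζ + g₁ ω) < 0))
    · have hφω : φ ω = f 0 := by
        have hmem : ω ∉ A := by
          rw [hA]; simp only [Set.mem_setOf_eq, not_lt]; linarith
        simp [hφ, Set.indicator_of_notMem hmem]
      rw [hφω]
      exact (f.continuous.tendsto 0).comp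
        (sigma_tendsto_zero (by linarith : 0 < g₂ ω - (ζ + g₁ ω)))
end
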